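/- Let p be prime, q = p^d, 3 ≤ l ≤ q, and let M_Z be the integer (q-l+1) × (q-1) matrix of coefficient vectors of (1+x)^l - 1, x(1+x)^l, ..., x^{q-l-1}(1+x)^l, x^{q-l}(1+x)^l - x^q. Then the p-adic elementary divisors (Smith normal form over Z_p) of M_Z consist of q-l units and exactly one entry divisible by p (equivalently, M_Z ⊗ Q has rank q-l+1 while M_Z ⊗ F_p has rank q-l). -/

import Mathlib

open Polynomial

/-- The `i`-th row polynomial of the paper's matrix `M` (equation (3)):
`(1+x)^l - 1` for `i = 0`, `x^(q-l)(1+x)^l - x^q` for `i = q-l`, and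
`x^i (1+x)^l` for `0 < i < q-l`. -/
noncomputable def rowPoly (R : Type*) [CommRing R] (q l i : ℕ) : R[X] :=
  if i = 0 then (1 + X) ^ l - 1
  else if i = q - l then X ^ (q - l) * (1 + X) ^ l - X ^ q
  else X ^ i * (1 + X) ^ l

/-- The paper's `(q-l+1) × (q-1)` matrix `M`: the `(i, j)` entry is the
coefficient of `x^(j+1)` in the `i`-th row polynomial, i.e. the rows are the
coefficient vectors (in degrees `1` through `q-1`) of the polynomials
`(1+x)^l - 1, x(1+x)^l, ..., x^(q-l-1)(1+x)^l, x^(q-l)(1+x)^l - x^q`. -/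
noncomputable def paperM (R : Type*) [CommRing R] (q l : ℕ) :
    Matrix (Fin (q - l + 1)) (Fin (q - 1)) R :=
  fun i j => (rowPoly R q l i).coeff ((j : ℕ) + 1)

/-! ### Auxiliary lemmas -/

section Aux

/-- The rows of `paperM` are (truncated) coefficient vectors of `X^i (1+X)^l`. -/
lemma paperM_coeff (R : Type*) [CommRing R] {q l : ℕ} (hl : 2 ≤ l) (hlq : l ≤ q)
    (i : Fin (q - l + 1)) (j : Fin (q - 1)) :
    paperM R q l i j = (X ^ (i : ℕ) * (1 + X) ^ l : R[X]).coeff ((j : ℕ) + 1) := by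
  have hj1 : (j : ℕ) + 1 ≠ 0 := by omega
  have hjq : (j : ℕ) + 1 ≠ q := by have := j.isLt; omega
  show (rowPoly R q l i).coeff ((j : ℕ) + 1) = _
  unfold rowPoly
  split_ifs with h0 hq
  · rw [h0, pow_zero, one_mul, coeff_sub, coeff_one, if_neg hj1, sub_zero]
  · rw [hq, coeff_sub, coeff_X_pow, if_neg hjq, sub_zero]
  · rfl

/-- Entry formula for `paperM` in terms of binomial coefficients. -/
lemma paperM_entry (R : Type*) [CommRing R] {q l : ℕ} (hl : 2 ≤ l) (hlq : l ≤ q)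
    (i : Fin (q - l + 1)) (j : Fin (q - 1)) :
    paperM R q l i j =
      if (i : ℕ) ≤ (j : ℕ) + 1 then (l.choose ((j : ℕ) + 1 - (i : ℕ)) : R) else 0 := by
  rw [paperM_coeff R hl hlq, coeff_X_pow_mul']
  split_ifs with h
  · rw [coeff_one_add_X_pow]
  · rfl

/-- `paperM` over `R` is the image of the integer `paperM` under the canonical map. -/
lemma paperM_map (R : Type*) [CommRing R] (q l : ℕ) :
    (paperM ℤ q l).map (Int.cast : ℤ → R) = paperM R q l := by
  have hrp : ∀ i : ℕ, (rowPoly ℤ q l i).map (Int.castRingHom R) = rowPoly R q l i := by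
    intro i
    unfold rowPoly
    split_ifs <;>
    simp [Polynomial.map_sub, Polynomial.map_pow, Polynomial.map_add, Polynomial.map_one,
      Polynomial.map_mul]
  ext i j
  show (Int.cast : ℤ → R) ((rowPoly ℤ q l (i : ℕ)).coeff ((j : ℕ) + 1)) = _
  rw [show ((Int.cast : ℤ → R) ((rowPoly ℤ q l (i : ℕ)).coeff ((j : ℕ) + 1)))
      = ((rowPoly ℤ q l (i : ℕ)).map (Int.castRingHom R)).coeff ((j : ℕ) + 1) by
    rw [Polynomial.coeff_map]; rfl, hrp]
  rfl

/-- Linear independence from a pivot structure. -/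
lemma li_of_pivots {K : Type*} [Field K] {ι n : Type*} [Fintype ι] [Fintype n]
    (v : ι → n → K) (pos : ι → ℕ) (piv : ι → n)
    (hinj : Function.Injective pos)
    (hpiv : ∀ i, v i (piv i) = 1)
    (hz : ∀ i k, pos i < pos k → v k (piv i) = 0) :
    LinearIndependent K v := by
  rw [Fintype.linearIndependent_iff]
  intro c hc
  suffices H : ∀ m (i : ι), pos i = m → c i = 0 by
    intro i; exact H (pos i) i rfl
  intro m
  induction m using Nat.strong_induction_on with
  | _ m IH =>
    intro i hi
    have h0 : ∑ k, c k * v k (piv i) = 0 := by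
      have := congrFun hc (piv i)
      simpa [Finset.sum_apply] using this
    have hsingle : ∑ k, c k * v k (piv i) = c i * v i (piv i) := by
      apply Finset.sum_eq_single
      · intro b _ hb
        rcases lt_trichotomy (pos b) (pos i) with hlt | heq | hgt
        · rw [IH (pos b) (hi ▸ hlt) b rfl, zero_mul]
        · exact absurd (hinj heq) hb
        · rw [hz i b hgt, mul_zero]
      · intro h; exact absurd (Finset.mem_univ i) h
    rw [hsingle, hpiv i, mul_one] at h0
    exact h0

/-- Linear independence of the rows of `paperM` over a characteristic-zero domain. -/
lemma rows_li (R : Type*) [CommRing R] [IsDomain R] [CharZero R] (q l : ℕ)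
    (hl : 2 ≤ l) (hlq : l ≤ q) :
    LinearIndependent R (fun (i : Fin (q - l + 1)) (j : Fin (q - 1)) =>
      (X ^ (i : ℕ) * (1 + X) ^ l : R[X]).coeff ((j : ℕ) + 1)) := by
  have hq0 : q ≠ 0 := by omega
  rw [Fintype.linearIndependent_iff]
  intro c hc
  set g : R[X] := ∑ i : Fin (q - l + 1), C (c i) * X ^ (i : ℕ) with hg
  set F : R[X] := g * (1 + X) ^ l with hF
  have hFsum : F = ∑ i : Fin (q - l + 1), C (c i) * (X ^ (i : ℕ) * (1 + X) ^ l) := by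
    rw [hF, hg, Finset.sum_mul]
    exact Finset.sum_congr rfl fun i _ => (mul_assoc _ _ _)
  have hFcoeff : ∀ n, F.coeff n
      = ∑ i : Fin (q - l + 1), c i * (X ^ (i : ℕ) * (1 + X) ^ l : R[X]).coeff n := by
    intro n
    rw [hFsum, finset_sum_coeff]
    exact Finset.sum_congr rfl fun i _ => coeff_C_mul _
  have hmid : ∀ n, 1 ≤ n → n ≤ q - 1 → F.coeff n = 0 := by
    intro n h1 h2
    have h := congrFun hc ⟨n - 1, by omega⟩
    simp only [Finset.sum_apply, Pi.smul_apply, smul_eq_mul, Pi.zero_apply] at h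
    rw [hFcoeff]
    have hn1 : n - 1 + 1 = n := by omega
    rw [← hn1]
    exact h
  have hdegg : g.natDegree ≤ q - l := by
    rw [hg]
    apply natDegree_sum_le_of_forall_le
    intro i _
    refine le_trans (natDegree_C_mul_le _ _) ?_
    rw [natDegree_X_pow]
    omega
  have hdegF : F.natDegree ≤ q := by
    rw [hF]
    refine le_trans (natDegree_mul_le) ?_
    have h1 : ((1 + X : R[X]) ^ l).natDegree ≤ l := by
      refine le_trans (natDegree_pow_le) ?_
      have h2 : (1 + X : R[X]).natDegree ≤ 1 := by
        refine le_trans (natDegree_add_le _ _) ?_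
        simp
      calc l * (1 + X : R[X]).natDegree ≤ l * 1 := Nat.mul_le_mul_left l h2
        _ = l := mul_one l
    omega
  have hFeq : F = C (F.coeff 0) + C (F.coeff q) * X ^ q := by
    ext n
    simp only [coeff_add, coeff_C, coeff_C_mul, coeff_X_pow, mul_ite, mul_one, mul_zero]
    by_cases h0 : n = 0
    · subst h0
      simp [hq0, Ne.symm hq0]
    · by_cases hqn : n = q
      · subst hqn
        simp [hq0, h0]
      · rw [if_neg h0, if_neg hqn, add_zero]
        by_cases hlt : n ≤ q - 1
        · exact hmid n (by omega) hlt
        · exact coeff_eq_zero_of_natDegree_lt (by omega)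
  have hdvd : (1 + X : R[X]) ^ 2 ∣ F := by
    rw [hF]
    exact dvd_mul_of_dvd_right (pow_dvd_pow (1 + X) hl) g
  obtain ⟨G, hG⟩ := hdvd
  have heval : F.eval (-1) = 0 := by
    rw [hG]
    simp
  have heval' : F.derivative.eval (-1) = 0 := by
    rw [hG, derivative_mul, derivative_pow]
    simp
  set b0 := F.coeff q with hb0def
  set a0 := F.coeff 0 with ha0def
  have hb : b0 = 0 := by
    have hder : F.derivative = C b0 * (C (q : R) * X ^ (q - 1)) := by
      conv_lhs => rw [hFeq]
      rw [derivative_add, derivative_C, derivative_mul, derivative_C,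
        derivative_X_pow]
      ring
    rw [hder] at heval'
    simp only [eval_mul, eval_C, eval_pow, eval_X] at heval'
    have hq' : (q : R) ≠ 0 := Nat.cast_ne_zero.mpr hq0
    have hne : ((-1 : R)) ^ (q - 1) ≠ 0 := pow_ne_zero _ (by norm_num)
    rcases mul_eq_zero.mp heval' with h | h
    · exact h
    · rcases mul_eq_zero.mp h with h' | h'
      · exact absurd h' hq'
      · exact absurd h' hne
  have ha : a0 = 0 := by
    rw [hFeq, hb] at heval
    simpa using heval
  have hF0 : F = 0 := by
    rw [hFeq, ha, hb]
    simp
  have h1X : (1 + X : R[X]) ≠ 0 := by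
    intro h
    have := congrArg (fun P : R[X] => P.coeff 0) h
    simp at this
  have hg0 : g = 0 := by
    rcases mul_eq_zero.mp (hF ▸ hF0) with h | h
    · exact h
    · exact absurd h (pow_ne_zero l h1X)
  intro i
  have hgc : g.coeff (i : ℕ) = c i := by
    rw [hg, finset_sum_coeff]
    rw [Finset.sum_eq_single i]
    · rw [coeff_C_mul, coeff_X_pow, if_pos rfl, mul_one]
    · intro b _ hb
      rw [coeff_C_mul, coeff_X_pow, if_neg (fun h => hb (Fin.ext h.symm)), mul_zero]
    · intro h; exact absurd (Finset.mem_univ i) h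
  rw [hg0, coeff_zero] at hgc
  exact hgc.symm

/-- `(1+X)^n` as a sum of monomials. -/
lemma one_add_X_pow_eq_sum (R : Type*) [CommRing R] (n : ℕ) :
    ((1 + X : R[X]) ^ n) = ∑ i : Fin (n + 1), C ((n.choose (i : ℕ) : R)) * X ^ (i : ℕ) := by
  rw [Fin.sum_univ_eq_sum_range (fun i => C ((n.choose i : R)) * X ^ i)]
  rw [add_comm (1 : R[X]) X, add_pow]
  apply Finset.sum_congr rfl
  intro k _
  rw [one_pow, mul_one, Polynomial.C_eq_natCast, mul_comm]

/-- Over `ZMod p` (with `q = p ^ d`) the rows of `paperM` satisfy the binomial dependency. -/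
lemma zmod_row_dep (p : ℕ) [hp : Fact p.Prime] (d q l : ℕ) (hq : q = p ^ d)
    (hl : 2 ≤ l) (hlq : l ≤ q) (j : Fin (q - 1)) :
    ∑ i : Fin (q - l + 1), ((q - l).choose (i : ℕ) : ZMod p) * paperM (ZMod p) q l i j = 0 := by
  have hsum : ∑ i : Fin (q - l + 1), ((q - l).choose (i : ℕ) : ZMod p) * paperM (ZMod p) q l i j
      = ((∑ i : Fin (q - l + 1), C (((q - l).choose (i : ℕ) : ZMod p)) * X ^ (i : ℕ))
          * (1 + X) ^ l).coeff ((j : ℕ) + 1) := by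
    rw [Finset.sum_mul, finset_sum_coeff]
    apply Finset.sum_congr rfl
    intro i _
    rw [paperM_coeff (ZMod p) hl hlq, mul_assoc, coeff_C_mul]
  rw [hsum, ← one_add_X_pow_eq_sum, ← pow_add]
  have hqq : q - l + l = q := by omega
  rw [hqq]
  have hchar : ((1 + X : (ZMod p)[X])) ^ q = 1 + X ^ q := by
    rw [hq]
    have := add_pow_char_pow (R := (ZMod p)[X]) (x := 1) (y := X) (p := p) (n := d)
    simpa using this
  rw [hchar, coeff_add, coeff_one, coeff_X_pow, if_neg (by omega), if_neg, add_zero]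
  have := j.isLt
  omega

/-- In `ℤ_[p]`, an element of larger norm divides one of smaller norm. -/
lemma padic_dvd_of_norm_le {p : ℕ} [hp : Fact p.Prime] {x y : ℤ_[p]} (hx : x ≠ 0)
    (h : ‖y‖ ≤ ‖x‖) : x ∣ y := by
  rcases eq_or_ne y 0 with rfl | hy
  · exact dvd_zero x
  have h1 : (1 : ℝ) < p := by exact_mod_cast hp.out.one_lt
  rw [PadicInt.norm_eq_zpow_neg_valuation hx, PadicInt.norm_eq_zpow_neg_valuation hy] at h
  have hval : x.valuation ≤ y.valuation := by
    have := (zpow_right_strictMono₀ h1).le_iff_le.mp h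
    omega
  have hnx := Nat.zero_le x.valuation
  have hny := Nat.zero_le y.valuation
  have hd1 : x ∣ (p : ℤ_[p]) ^ x.valuation := by
    have hu := PadicInt.unitCoeff_spec hx
    refine ⟨((PadicInt.unitCoeff hx)⁻¹ : ℤ_[p]ˣ), ?_⟩
    calc (p : ℤ_[p]) ^ x.valuation
        = (((PadicInt.unitCoeff hx) : ℤ_[p]) * (p : ℤ_[p]) ^ x.valuation)
            * ((PadicInt.unitCoeff hx)⁻¹ : ℤ_[p]ˣ) := by
          rw [mul_comm ((PadicInt.unitCoeff hx) : ℤ_[p]) _, Units.mul_inv_cancel_right]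
      _ = x * ((PadicInt.unitCoeff hx)⁻¹ : ℤ_[p]ˣ) := by rw [← hu]
  have hd2 : ((p : ℤ_[p]) ^ x.valuation) ∣ (p : ℤ_[p]) ^ y.valuation :=
    pow_dvd_pow _ (by omega)
  have hd3 : ((p : ℤ_[p]) ^ y.valuation) ∣ y := by
    conv_rhs => rw [PadicInt.unitCoeff_spec hy]
    exact dvd_mul_left _ _
  exact hd1.trans (hd2.trans hd3)

lemma padic_toZMod_eq_zero_iff {p : ℕ} [Fact p.Prime] (x : ℤ_[p]) :
    PadicInt.toZMod x = 0 ↔ (p : ℤ_[p]) ∣ x := by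
  rw [show (PadicInt.toZMod x = 0) ↔ x ∈ RingHom.ker (PadicInt.toZMod (p := p)) from
    RingHom.mem_ker.symm]
  rw [PadicInt.ker_toZMod, PadicInt.maximalIdeal_eq_span_p, Ideal.mem_span_singleton]

lemma padic_isUnit_of_toZMod_ne {p : ℕ} [Fact p.Prime] {x : ℤ_[p]}
    (h : PadicInt.toZMod x ≠ 0) : IsUnit x := by
  by_contra hu
  apply h
  rw [padic_toZMod_eq_zero_iff, ← PadicInt.norm_lt_one_iff_dvd]
  rcases lt_or_eq_of_le (PadicInt.norm_le_one x) with h' | h'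
  · exact h'
  · exact absurd (PadicInt.isUnit_iff.mpr h') hu

end Aux

/-- Let `p` be prime, `q = p^d` (`d ≥ 1`), `3 ≤ l ≤ q`, and
let `M_ℤ` be the integer matrix of the paper. Then the Smith normal form of
`M_ℤ` over the p-adic integers `ℤ_p` has `q - l` unit elementary divisors and
exactly one non-unit elementary divisor, which is nonzero and divisible by `p`
(equivalently, `M_ℤ ⊗ ℚ` has rank `q - l + 1` while `M_ℤ ⊗ F_p` has rank
`q - l`). -/
theorem paperM_smith_normal_form (p : ℕ) [Fact p.Prime] (d l q : ℕ) (hd : 0 < d)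
    (hq : q = p ^ d) (hl : 3 ≤ l) (hlq : l ≤ q) :
    (∃ (A : Matrix (Fin (q - l + 1)) (Fin (q - l + 1)) ℤ_[p])
       (B : Matrix (Fin (q - 1)) (Fin (q - 1)) ℤ_[p])
       (e : Fin (q - l + 1) → ℤ_[p]),
      IsUnit A ∧ IsUnit B ∧
      A * ((paperM ℤ q l).map (Int.cast : ℤ → ℤ_[p])) * B =
        Matrix.of (fun (i : Fin (q - l + 1)) (j : Fin (q - 1)) => if (j : ℕ) = (i : ℕ) then e i else 0) ∧
      (∃! i, ¬ IsUnit (e i)) ∧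
      ∀ i, ¬ IsUnit (e i) → e i ≠ 0 ∧ (p : ℤ_[p]) ∣ e i) ∧
    ((paperM ℤ q l).map (Int.cast : ℤ → ℚ)).rank = q - l + 1 ∧
    ((paperM ℤ q l).map (Int.cast : ℤ → ZMod p)).rank = q - l := by
  classical
  have hp : p.Prime := Fact.out
  haveI : Fact (1 < p) := ⟨hp.one_lt⟩
  have hq3 : 3 ≤ q := hl.trans hlq
  have hl2 : 2 ≤ l := by omega
  have hfb : q - l ≤ q - 1 := by omega
  have hql1 : q - l < q - 1 := by omega
  -- the p-adic and mod-p matrices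
  set Mp : Matrix (Fin (q - l + 1)) (Fin (q - 1)) ℤ_[p] := paperM ℤ_[p] q l with hMpdef
  set Mb : Matrix (Fin (q - l + 1)) (Fin (q - 1)) (ZMod p) := paperM (ZMod p) q l with hMbdef
  have hMp : (paperM ℤ q l).map (Int.cast : ℤ → ℤ_[p]) = Mp := paperM_map ℤ_[p] q l
  have htz : ∀ i j, PadicInt.toZMod (Mp i j) = Mb i j := by
    intro i j
    have h1 : Mp i j = ((paperM ℤ q l i j : ℤ) : ℤ_[p]) := by rw [← hMp]; rfl
    have h2 : Mb i j = ((paperM ℤ q l i j : ℤ) : ZMod p) := by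
      rw [hMbdef, ← paperM_map (ZMod p) q l]; rfl
    rw [h1, h2, map_intCast]
  have hMpe : ∀ (i : Fin (q - l + 1)) (j : Fin (q - 1)), Mp i j =
      if (i : ℕ) ≤ (j : ℕ) + 1 then (l.choose ((j : ℕ) + 1 - (i : ℕ)) : ℤ_[p]) else 0 :=
    fun i j => paperM_entry ℤ_[p] hl2 hlq i j
  have hMbe : ∀ (i : Fin (q - l + 1)) (j : Fin (q - 1)), Mb i j =
      if (i : ℕ) ≤ (j : ℕ) + 1 then (l.choose ((j : ℕ) + 1 - (i : ℕ)) : ZMod p) else 0 :=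
    fun i j => paperM_entry (ZMod p) hl2 hlq i j
  -- the triangular first-block matrix and the reduction vector `a`
  set T : Matrix (Fin (q - l)) (Fin (q - l)) ℤ_[p] :=
    Matrix.of (fun i j => Mp i.succ (Fin.castLE hfb j)) with hTdef
  have hTtri : T.BlockTriangular id := by
    intro i j hji
    have hji' : (j : ℕ) < (i : ℕ) := hji
    show Mp i.succ (Fin.castLE hfb j) = 0
    rw [hMpe]
    rw [if_neg]
    simp only [Fin.val_succ, Fin.coe_castLE]
    omega
  have hTdiag : ∀ i, T i i = 1 := by
    intro i
    show Mp i.succ (Fin.castLE hfb i) = 1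
    rw [hMpe]
    simp only [Fin.val_succ, Fin.coe_castLE]
    rw [if_pos (le_refl _), Nat.sub_self, Nat.choose_zero_right, Nat.cast_one]
  have hTdet : T.det = 1 := by
    rw [Matrix.det_of_upperTriangular hTtri]
    simp [hTdiag]
  have hTunit : IsUnit T.det := hTdet ▸ isUnit_one
  set r : Fin (q - l) → ℤ_[p] := fun j => Mp 0 (Fin.castLE hfb j) with hrdef
  set a : Fin (q - l) → ℤ_[p] := Matrix.vecMul r T⁻¹ with hadef
  have ha : Matrix.vecMul a T = r := by
    rw [hadef, Matrix.vecMul_vecMul, Matrix.nonsing_inv_mul T hTunit, Matrix.vecMul_one]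
  -- the residual vector `v`
  set v : Fin (q - 1) → ℤ_[p] :=
    fun j => Mp 0 j - ∑ k : Fin (q - l), a k * Mp k.succ j with hvdef
  have hvfb : ∀ j : Fin (q - 1), (j : ℕ) < q - l → v j = 0 := by
    intro j hj
    have h1 : Fin.castLE hfb ⟨(j : ℕ), hj⟩ = j := Fin.ext rfl
    have hsum : ∑ k : Fin (q - l), a k * Mp k.succ (Fin.castLE hfb ⟨(j : ℕ), hj⟩)
        = Mp 0 (Fin.castLE hfb ⟨(j : ℕ), hj⟩) := by
      have h2 := congrFun ha ⟨(j : ℕ), hj⟩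
      simpa [Matrix.vecMul, dotProduct, hTdef, hrdef] using h2
    show Mp 0 j - ∑ k : Fin (q - l), a k * Mp k.succ j = 0
    rw [← h1, hsum, sub_self]
  -- mod-p analysis of `v`
  set Tb : Matrix (Fin (q - l)) (Fin (q - l)) (ZMod p) :=
    Matrix.of (fun i j => Mb i.succ (Fin.castLE hfb j)) with hTbdef
  have hTbtri : Tb.BlockTriangular id := by
    intro i j hji
    have hji' : (j : ℕ) < (i : ℕ) := hji
    show Mb i.succ (Fin.castLE hfb j) = 0
    rw [hMbe]
    rw [if_neg]
    simp only [Fin.val_succ, Fin.coe_castLE]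
    omega
  have hTbdiag : ∀ i, Tb i i = 1 := by
    intro i
    show Mb i.succ (Fin.castLE hfb i) = 1
    rw [hMbe]
    simp only [Fin.val_succ, Fin.coe_castLE]
    rw [if_pos (le_refl _), Nat.sub_self, Nat.choose_zero_right, Nat.cast_one]
  have hTbdet : Tb.det = 1 := by
    rw [Matrix.det_of_upperTriangular hTbtri]
    simp [hTbdiag]
  have hTbunit : IsUnit Tb.det := hTbdet ▸ isUnit_one
  have hdep : ∀ j, ∑ i : Fin (q - l + 1), ((q - l).choose (i : ℕ) : ZMod p) * Mb i j = 0 :=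
    fun j => zmod_row_dep p d q l hq hl2 hlq j
  have hMb0 : ∀ j, Mb 0 j
      = -∑ k : Fin (q - l), (((q - l).choose ((k : ℕ) + 1) : ZMod p)) * Mb k.succ j := by
    intro j
    have h0 := hdep j
    rw [Fin.sum_univ_succ] at h0
    simp only [Fin.val_zero, Nat.choose_zero_right, Nat.cast_one, one_mul, Fin.val_succ] at h0
    exact eq_neg_of_add_eq_zero_left h0
  set ab : Fin (q - l) → ZMod p := fun k => PadicInt.toZMod (a k) with habdef
  set cb : Fin (q - l) → ZMod p :=
    fun k => -(((q - l).choose ((k : ℕ) + 1) : ZMod p)) - ab k with hcbdef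
  have hvb_eq : ∀ j, PadicInt.toZMod (v j) = ∑ k : Fin (q - l), cb k * Mb k.succ j := by
    intro j
    have h1 : PadicInt.toZMod (v j)
        = Mb 0 j - ∑ k : Fin (q - l), ab k * Mb k.succ j := by
      show PadicInt.toZMod (Mp 0 j - ∑ k : Fin (q - l), a k * Mp k.succ j) = _
      rw [map_sub, map_sum, htz]
      congr 1
      apply Finset.sum_congr rfl
      intro k _
      rw [map_mul, htz]
    rw [h1, hMb0 j]
    rw [show (∑ k : Fin (q - l), cb k * Mb k.succ j)
        = ∑ k : Fin (q - l), (-(((q - l).choose ((k : ℕ) + 1) : ZMod p) * Mb k.succ j)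
            - ab k * Mb k.succ j) from
      Finset.sum_congr rfl (fun k _ => by rw [hcbdef]; ring)]
    rw [Finset.sum_sub_distrib, Finset.sum_neg_distrib]
  have hvbfb : ∀ j' : Fin (q - l), ∑ k : Fin (q - l), cb k * Tb k j' = 0 := by
    intro j'
    have h1 := hvb_eq (Fin.castLE hfb j')
    rw [hvfb (Fin.castLE hfb j') (by simpa using j'.isLt), map_zero] at h1
    exact h1.symm
  have hcb : cb = 0 := by
    have hvm : Matrix.vecMul cb Tb = 0 := by
      funext j'
      simpa [Matrix.vecMul, dotProduct] using hvbfb j'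
    have h2 := congrArg (fun w => Matrix.vecMul w Tb⁻¹) hvm
    simpa [Matrix.vecMul_vecMul, Matrix.mul_nonsing_inv Tb hTbunit, Matrix.vecMul_one,
      Matrix.zero_vecMul] using h2
  have hvb0 : ∀ j, PadicInt.toZMod (v j) = 0 := by
    intro j
    rw [hvb_eq j]
    simp [hcb]
  -- `v` is nonzero
  have hvne : ∃ j, v j ≠ 0 := by
    by_contra h
    push_neg at h
    have hli := rows_li ℤ_[p] q l hl2 hlq
    rw [Fintype.linearIndependent_iff] at hli
    set cc : Fin (q - l + 1) → ℤ_[p] := Fin.cases 1 (fun k => -(a k)) with hccdef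
    have h1 : ∑ i : Fin (q - l + 1), cc i •
        (fun j : Fin (q - 1) => (X ^ (i : ℕ) * (1 + X) ^ l : ℤ_[p][X]).coeff ((j : ℕ) + 1))
        = 0 := by
      funext j
      simp only [Finset.sum_apply, Pi.smul_apply, smul_eq_mul, Pi.zero_apply]
      have hcoe : ∀ (i : Fin (q - l + 1)),
          (X ^ (i : ℕ) * (1 + X) ^ l : ℤ_[p][X]).coeff ((j : ℕ) + 1) = Mp i j :=
        fun i => (paperM_coeff ℤ_[p] hl2 hlq i j).symm
      rw [Fin.sum_univ_succ]
      simp only [hcoe, hccdef, Fin.cases_zero, Fin.cases_succ, one_smul, smul_eq_mul, neg_mul]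
      have h2 := h j
      rw [hvdef] at h2
      simp only at h2
      rw [sub_eq_zero] at h2
      rw [one_mul, Finset.sum_neg_distrib, ← sub_eq_add_neg, h2, sub_self]
    have h3 := hli cc h1 0
    rw [hccdef] at h3
    simp only [Fin.cases_zero] at h3
    exact one_ne_zero h3
  -- the gcd entry
  have hne : (Finset.univ : Finset (Fin (q - 1))).Nonempty :=
    ⟨⟨0, by omega⟩, Finset.mem_univ _⟩
  obtain ⟨j₀, -, hj₀max⟩ := Finset.exists_max_image Finset.univ (fun j => ‖v j‖) hne
  set dd : ℤ_[p] := v j₀ with hddef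
  have hd0 : dd ≠ 0 := by
    obtain ⟨j, hj⟩ := hvne
    intro h
    apply hj
    have h2 : ‖v j‖ ≤ 0 := by
      have h3 := hj₀max j (Finset.mem_univ j)
      rw [h] at h3
      simpa using h3
    exact norm_le_zero_iff.mp h2
  have hdvd : ∀ j, dd ∣ v j :=
    fun j => padic_dvd_of_norm_le hd0 (hj₀max j (Finset.mem_univ j))
  choose w hw using hdvd
  have hj₀fb : q - l ≤ (j₀ : ℕ) := by
    by_contra h
    push_neg at h
    exact hd0 (hvfb j₀ h)
  have hwj₀ : w j₀ = 1 := by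
    have h2 : dd * w j₀ = dd * 1 := by rw [mul_one, ← hw j₀, ← hddef]
    exact mul_left_cancel₀ hd0 h2
  have hwfb : ∀ j : Fin (q - 1), (j : ℕ) < q - l → w j = 0 := by
    intro j hj
    have h2 : dd * w j = dd * 0 := by rw [← hw j, hvfb j hj, mul_zero]
    exact mul_left_cancel₀ hd0 h2
  have hpd : (p : ℤ_[p]) ∣ dd := (padic_toZMod_eq_zero_iff dd).mp (hvb0 j₀)
  have hddnu : ¬IsUnit dd := by
    intro hu
    have h2 := hu.map (PadicInt.toZMod (p := p))
    rw [hddef] at h2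
    rw [hvb0 j₀] at h2
    exact h2.ne_zero rfl
  -- the matrix A
  set A : Matrix (Fin (q - l + 1)) (Fin (q - l + 1)) ℤ_[p] := Matrix.of (fun i k =>
    if (i : ℕ) = 0 then
      (if h : (k : ℕ) = 0 then 1 else -(a ⟨(k : ℕ) - 1, by have := k.isLt; omega⟩))
    else if k = i then 1 else 0) with hAdef
  have hAtri : A.BlockTriangular id := by
    intro i k hki
    have hki' : (k : ℕ) < (i : ℕ) := hki
    show (if (i : ℕ) = 0 then _ else if k = i then (1 : ℤ_[p]) else 0) = 0
    rw [if_neg (by omega), if_neg (by intro h; subst h; exact absurd hki' (lt_irrefl _))]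
  have hAdiag : ∀ i, A i i = 1 := by
    intro i
    show (if (i : ℕ) = 0 then _ else if i = i then (1 : ℤ_[p]) else 0) = 1
    by_cases h : (i : ℕ) = 0
    · rw [if_pos h, dif_pos h]
    · rw [if_neg h, if_pos rfl]
  have hAunit : IsUnit A := by
    rw [Matrix.isUnit_iff_isUnit_det]
    rw [Matrix.det_of_upperTriangular hAtri]
    have h2 : ∏ i, A i i = 1 := by simp [hAdiag]
    rw [h2]
    exact isUnit_one
  have hA00 : A 0 0 = 1 := hAdiag 0
  have hA0succ : ∀ k : Fin (q - l), A 0 k.succ = -(a k) := by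
    intro k
    rw [hAdef]
    simp only [Matrix.of_apply]
    rw [if_pos (show ((0 : Fin (q - l + 1)) : ℕ) = 0 by simp),
      dif_neg (by simp [Fin.val_succ])]
    simp only [neg_inj]
    exact congrArg a (Fin.ext (by simp [Fin.val_succ]))
  have hAM0 : ∀ j, (A * Mp) 0 j = v j := by
    intro j
    rw [Matrix.mul_apply, Fin.sum_univ_succ, hA00, one_mul]
    show Mp 0 j + ∑ k : Fin (q - l), A 0 k.succ * Mp k.succ j
        = Mp 0 j - ∑ k : Fin (q - l), a k * Mp k.succ j
    simp only [hA0succ, neg_mul]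
    rw [Finset.sum_neg_distrib, ← sub_eq_add_neg]
  have hAMs : ∀ (k : Fin (q - l)) j, (A * Mp) k.succ j = Mp k.succ j := by
    intro k j
    rw [Matrix.mul_apply]
    rw [Finset.sum_eq_single k.succ]
    · rw [hAdiag k.succ, one_mul]
    · intro b _ hb
      have h2 : A k.succ b = 0 := by
        rw [hAdef]
        simp only [Matrix.of_apply]
        rw [if_neg (by simp [Fin.val_succ]), if_neg hb]
      rw [h2, zero_mul]
    · intro h2; exact absurd (Finset.mem_univ _) h2
  -- the elementary divisors and the matrix C
  set ee : Fin (q - l + 1) → ℤ_[p] := fun i => if i = 0 then dd else 1 with heedef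
  set Cm : Matrix (Fin (q - 1)) (Fin (q - 1)) ℤ_[p] := Matrix.of (fun m j =>
    if (m : ℕ) = 0 then w j
    else if h : (m : ℕ) ≤ q - l then Mp ⟨(m : ℕ), by omega⟩ j
    else if (j : ℕ) = (if (m : ℕ) ≤ (j₀ : ℕ) then (m : ℕ) - 1 else (m : ℕ)) then 1 else 0)
    with hCdef
  have hCm0 : ∀ (m : Fin (q - 1)) j, (m : ℕ) = 0 → Cm m j = w j := by
    intro m j hm
    show (if (m : ℕ) = 0 then w j else _) = w j
    rw [if_pos hm]
  have hCmmid : ∀ (m : Fin (q - 1)) j (_ : (m : ℕ) ≠ 0) (h2 : (m : ℕ) ≤ q - l),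
      Cm m j = Mp ⟨(m : ℕ), by omega⟩ j := by
    intro m j h1 h2
    show (if (m : ℕ) = 0 then w j else if h : (m : ℕ) ≤ q - l
      then Mp ⟨(m : ℕ), by omega⟩ j else _) = _
    rw [if_neg h1, dif_pos h2]
  have hCmhigh : ∀ (m : Fin (q - 1)) j (_ : (m : ℕ) ≠ 0) (h2 : ¬((m : ℕ) ≤ q - l)),
      Cm m j = if (j : ℕ) = (if (m : ℕ) ≤ (j₀ : ℕ) then (m : ℕ) - 1 else (m : ℕ))
        then 1 else 0 := by
    intro m j h1 h2
    show (if (m : ℕ) = 0 then w j else if h : (m : ℕ) ≤ q - l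
      then Mp ⟨(m : ℕ), by omega⟩ j else _) = _
    rw [if_neg h1, dif_neg h2]
  -- C is invertible
  have hCu : IsUnit Cm.det := by
    set Cb : Matrix (Fin (q - 1)) (Fin (q - 1)) (ZMod p) := Cm.map (PadicInt.toZMod) with hCbdef
    have hdet : PadicInt.toZMod Cm.det = Cb.det := RingHom.map_det _ _
    have hli : LinearIndependent (ZMod p) (fun m => Cb m) := by
      apply li_of_pivots _
        (fun m : Fin (q - 1) => if (m : ℕ) = 0 then q - l else
          if (m : ℕ) ≤ q - l then (m : ℕ) - 1 else (m : ℕ))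
        (fun m : Fin (q - 1) => if (m : ℕ) = 0 then j₀ else
          if (m : ℕ) ≤ q - l then (⟨(m : ℕ) - 1, by have := m.isLt; omega⟩ : Fin (q - 1))
          else (⟨(if (m : ℕ) ≤ (j₀ : ℕ) then (m : ℕ) - 1 else (m : ℕ)),
            by have := m.isLt; split_ifs <;> omega⟩ : Fin (q - 1)))
      · -- injectivity of positions
        intro m m' hmm
        apply Fin.ext
        simp only at hmm
        split_ifs at hmm <;> omega
      · -- pivots are 1
        intro m
        by_cases h0 : (m : ℕ) = 0
        · rw [if_pos h0]
          show PadicInt.toZMod (Cm m j₀) = 1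
          rw [hCm0 m j₀ h0, hwj₀, map_one]
        · by_cases h2 : (m : ℕ) ≤ q - l
          · rw [if_neg h0, if_pos h2]
            show PadicInt.toZMod (Cm m ⟨(m : ℕ) - 1, _⟩) = 1
            rw [hCmmid m _ h0 h2, htz, hMbe]
            simp only
            rw [if_pos (by omega)]
            rw [show (m : ℕ) - 1 + 1 - (m : ℕ) = 0 by omega]
            rw [Nat.choose_zero_right, Nat.cast_one]
          · rw [if_neg h0, if_neg h2]
            show PadicInt.toZMod (Cm m ⟨_, _⟩) = 1
            rw [hCmhigh m _ h0 h2]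
            rw [if_pos rfl, map_one]
      · -- vanishing below pivots
        intro m k hmk
        by_cases hm0 : (m : ℕ) = 0
        · -- pivot is j₀, position q - l; k must be a "high" row
          rw [if_pos hm0] at hmk ⊢
          by_cases hk0 : (k : ℕ) = 0
          · rw [if_pos hk0] at hmk; omega
          · by_cases hk2 : (k : ℕ) ≤ q - l
            · rw [if_neg hk0, if_pos hk2] at hmk; omega
            · show PadicInt.toZMod (Cm k j₀) = 0
              rw [hCmhigh k j₀ hk0 hk2]
              rw [if_neg (by split_ifs <;> omega), map_zero]
        · by_cases hm2 : (m : ℕ) ≤ q - l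
          · -- pivot is column m-1 < q-l
            rw [if_neg hm0, if_pos hm2] at hmk ⊢
            have hcol : ((⟨(m : ℕ) - 1, by have := m.isLt; omega⟩ : Fin (q - 1)) : ℕ)
                = (m : ℕ) - 1 := rfl
            by_cases hk0 : (k : ℕ) = 0
            · rw [if_pos hk0] at hmk
              show PadicInt.toZMod (Cm k _) = 0
              rw [hCm0 k _ hk0, hwfb _ (by rw [hcol]; omega), map_zero]
            · by_cases hk2 : (k : ℕ) ≤ q - l
              · rw [if_neg hk0, if_pos hk2] at hmk
                show PadicInt.toZMod (Cm k _) = 0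
                rw [hCmmid k _ hk0 hk2, htz, hMbe]
                simp only [hcol]
                rw [if_neg (by omega)]
              · rw [if_neg hk0, if_neg hk2] at hmk
                show PadicInt.toZMod (Cm k _) = 0
                rw [hCmhigh k _ hk0 hk2]
                rw [if_neg (by simp only [hcol]; split_ifs <;> omega), map_zero]
          · -- pivot is a "high" column; k must be a later "high" row
            rw [if_neg hm0, if_neg hm2] at hmk ⊢
            by_cases hk0 : (k : ℕ) = 0
            · rw [if_pos hk0] at hmk; omega
            · by_cases hk2 : (k : ℕ) ≤ q - l
              · rw [if_neg hk0, if_pos hk2] at hmk; omega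
              · rw [if_neg hk0, if_neg hk2] at hmk
                show PadicInt.toZMod (Cm k _) = 0
                rw [hCmhigh k _ hk0 hk2]
                rw [if_neg, map_zero]
                show ¬((⟨(if (m : ℕ) ≤ (j₀ : ℕ) then (m : ℕ) - 1 else (m : ℕ)),
                  _⟩ : Fin (q - 1)) : ℕ) = _
                simp only
                split_ifs <;> omega
    have hCbunit : IsUnit Cb.det :=
      (Matrix.isUnit_iff_isUnit_det Cb).mp (Matrix.linearIndependent_rows_iff_isUnit.mp hli)
    apply padic_isUnit_of_toZMod_ne
    rw [hdet]
    exact hCbunit.ne_zero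
  -- A * Mp = E * Cm
  have hECrow : ∀ (i : Fin (q - l + 1)) (j : Fin (q - 1)),
      ((Matrix.of (fun (i : Fin (q - l + 1)) (j : Fin (q - 1)) =>
        if (j : ℕ) = (i : ℕ) then ee i else 0)) * Cm) i j
      = ee i * Cm ⟨(i : ℕ), by have := i.isLt; omega⟩ j := by
    intro i j
    rw [Matrix.mul_apply]
    rw [Finset.sum_eq_single (⟨(i : ℕ), by have := i.isLt; omega⟩ : Fin (q - 1))]
    · rw [Matrix.of_apply, if_pos rfl]
    · intro b _ hb
      rw [Matrix.of_apply, if_neg (fun hval => hb (Fin.ext hval)), zero_mul]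
    · intro h2; exact absurd (Finset.mem_univ _) h2
  have hAMEC : A * Mp = (Matrix.of (fun (i : Fin (q - l + 1)) (j : Fin (q - 1)) =>
      if (j : ℕ) = (i : ℕ) then ee i else 0)) * Cm := by
    ext i j
    rw [hECrow]
    refine Fin.cases ?_ ?_ i
    · rw [hAM0 j]
      have he0 : ee 0 = dd := by rw [heedef]; simp
      rw [he0]
      rw [hCm0 _ j rfl]
      exact hw j
    · intro k
      rw [hAMs k j]
      have hes : ee k.succ = 1 := by
        rw [heedef]
        simp only
        rw [if_neg (Fin.succ_ne_zero k)]
      rw [hes, one_mul]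
      rw [hCmmid _ j (by simp [Fin.val_succ]) (by simp only [Fin.val_succ]; omega)]
  -- assemble everything
  refine ⟨⟨A, Cm⁻¹, ee, hAunit, ?_, ?_, ?_, ?_⟩, ?_, ?_⟩
  · -- B is a unit
    exact ⟨⟨Cm⁻¹, Cm, Matrix.nonsing_inv_mul Cm hCu, Matrix.mul_nonsing_inv Cm hCu⟩, rfl⟩
  · -- the Smith normal form equation
    rw [hMp, hAMEC, Matrix.mul_assoc, Matrix.mul_nonsing_inv Cm hCu, Matrix.mul_one]
  · -- unique non-unit elementary divisor
    refine ⟨0, ?_, ?_⟩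
    · show ¬IsUnit (ee 0)
      have he0 : ee 0 = dd := by rw [heedef]; simp
      rw [he0]
      exact hddnu
    · intro y hy
      by_contra hy0
      apply hy
      have hey : ee y = 1 := by
        rw [heedef]
        simp only
        rw [if_neg hy0]
      rw [hey]
      exact isUnit_one
  · -- non-unit divisor is nonzero and divisible by p
    intro i hi
    by_cases h0 : i = 0
    · subst h0
      have he0 : ee 0 = dd := by rw [heedef]; simp
      rw [he0]
      exact ⟨hd0, hpd⟩
    · exfalso
      apply hi
      have hey : ee i = 1 := by
        rw [heedef]
        simp only
        rw [if_neg h0]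
      rw [hey]
      exact isUnit_one
  · -- rank over ℚ
    rw [paperM_map ℚ q l]
    rw [← Matrix.rank_transpose]
    have hrows : (fun i => paperM ℚ q l i) = (fun (i : Fin (q - l + 1)) (j : Fin (q - 1)) =>
        (X ^ (i : ℕ) * (1 + X) ^ l : ℚ[X]).coeff ((j : ℕ) + 1)) := by
      funext i j
      exact paperM_coeff ℚ hl2 hlq i j
    have h1 : (Matrix.transpose (paperM ℚ q l)).rank
        = Module.finrank ℚ (Submodule.span ℚ (Set.range (fun i => paperM ℚ q l i))) := by
      rw [show (Matrix.transpose (paperM ℚ q l)).rank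
          = Module.finrank ℚ (LinearMap.range (Matrix.transpose (paperM ℚ q l)).mulVecLin) from rfl]
      rw [Matrix.range_mulVecLin]; rfl
    rw [h1]
    rw [show Set.range (fun i => paperM ℚ q l i)
        = Set.range (fun (i : Fin (q - l + 1)) (j : Fin (q - 1)) =>
          (X ^ (i : ℕ) * (1 + X) ^ l : ℚ[X]).coeff ((j : ℕ) + 1)) from
      congrArg Set.range hrows]
    rw [finrank_span_eq_card (rows_li ℚ q l hl2 hlq), Fintype.card_fin]
  · -- rank over ZMod p
    rw [paperM_map (ZMod p) q l, ← hMbdef]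
    rw [← Matrix.rank_transpose]
    have h1 : (Matrix.transpose Mb).rank
        = Module.finrank (ZMod p) (Submodule.span (ZMod p) (Set.range (fun i => Mb i))) := by
      rw [show (Matrix.transpose Mb).rank = Module.finrank (ZMod p) (LinearMap.range (Matrix.transpose Mb).mulVecLin) from rfl]
      rw [Matrix.range_mulVecLin]; rfl
    rw [h1]
    have hspan : Submodule.span (ZMod p) (Set.range (fun i => Mb i))
        = Submodule.span (ZMod p) (Set.range (fun k : Fin (q - l) => Mb k.succ)) := by
      apply le_antisymm
      · rw [Submodule.span_le]
        rintro x ⟨i, rfl⟩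
        refine Fin.cases ?_ ?_ i
        · show Mb 0 ∈ Submodule.span (ZMod p) (Set.range (fun k : Fin (q - l) => Mb k.succ))
          have h0 : Mb 0 = ∑ k : Fin (q - l),
              (-(((q - l).choose ((k : ℕ) + 1) : ZMod p))) • Mb k.succ := by
            funext j
            rw [Finset.sum_apply]
            simp only [Pi.smul_apply, smul_eq_mul, neg_mul]
            rw [Finset.sum_neg_distrib, hMb0 j]
          rw [h0]
          exact Submodule.sum_mem _ (fun k _ =>
            Submodule.smul_mem _ _ (Submodule.subset_span ⟨k, rfl⟩))

        · intro k
          exact Submodule.subset_span ⟨k, rfl⟩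
      · apply Submodule.span_mono
        rintro x ⟨k, rfl⟩
        exact ⟨k.succ, rfl⟩
    rw [hspan]
    have hli2 : LinearIndependent (ZMod p) (fun k : Fin (q - l) => Mb k.succ) := by
      apply li_of_pivots _ (fun k : Fin (q - l) => (k : ℕ))
        (fun k : Fin (q - l) => (⟨(k : ℕ), by have := k.isLt; omega⟩ : Fin (q - 1)))
      · intro x y h; exact Fin.ext h
      · intro k
        rw [hMbe]
        simp only [Fin.val_succ]
        rw [if_pos (le_refl _)]
        rw [show (k : ℕ) + 1 - ((k : ℕ) + 1) = 0 by omega]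
        rw [Nat.choose_zero_right, Nat.cast_one]
      · intro i k hik
        rw [hMbe]
        simp only [Fin.val_succ]
        rw [if_neg (by omega)]
    rw [finrank_span_eq_card hli2, Fintype.card_fin]
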